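/- arXiv:1610.04042 — 4 statements merged into one kernel-verified Lean document; each statement's English description precedes it below -/
import Mathlib

section
/- (Proposition 1, constant-objective form.) Let R : ℝ → ℝ be any function and let α : ℕ → {0,…,n} be a GOTL weight sequence whose objective is constant over the window, i.e., R_k = R for all k ∈ {k₀, k₀+1, …, k₀+n-1}. Then the grid index α_{k₀+n} is locally optimal for R. -/
/-- Proposition 1 (constant-objective form): if `α` is a GOTL weight sequence (it moves to
a strictly better adjacent grid index whenever one exists, and stays put otherwise) and the
objective equals `R` throughout the window `{k₀, …, k₀ + n - 1}`, then `α (k₀ + n)` is a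
locally optimal grid index for `R`. -/
theorem gotl_reaches_local_optimum (n : ℕ) (hn : 1 ≤ n)
    (Rk : ℕ → ℝ → ℝ) (α : ℕ → ℕ)
    (hαgrid : ∀ k, α k ≤ n)
    (hstep : ∀ k,
      (∃ j : ℕ, j ≤ n ∧ (j = α k + 1 ∨ j + 1 = α k) ∧
          Rk k ((j : ℝ) / n) < Rk k ((α k : ℝ) / n)) →
        ((α (k + 1) = α k + 1 ∨ α (k + 1) + 1 = α k) ∧
          Rk k ((α (k + 1) : ℝ) / n) < Rk k ((α k : ℝ) / n)))
    (hstay : ∀ k,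
      (¬ ∃ j : ℕ, j ≤ n ∧ (j = α k + 1 ∨ j + 1 = α k) ∧
          Rk k ((j : ℝ) / n) < Rk k ((α k : ℝ) / n)) →
        α (k + 1) = α k)
    (R : ℝ → ℝ) (k₀ : ℕ)
    (hwin : ∀ k, k₀ ≤ k → k < k₀ + n → Rk k = R) :
    ∀ j : ℕ, j ≤ n → (j = α (k₀ + n) + 1 ∨ j + 1 = α (k₀ + n)) →
      ¬ R ((j : ℝ) / n) < R ((α (k₀ + n) : ℝ) / n) := by
  have main : ∀ m, m < n →
      ((∀ j : ℕ, j ≤ n → (j = α (k₀ + m + 1) + 1 ∨ j + 1 = α (k₀ + m + 1)) →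
            ¬ R ((j : ℝ) / n) < R ((α (k₀ + m + 1) : ℝ) / n))
      ∨ (α (k₀ + m + 1) = α (k₀ + m) + 1 ∧
            R ((α (k₀ + m + 1) : ℝ) / n) < R ((α (k₀ + m) : ℝ) / n) ∧
            α (k₀ + m + 1) = α k₀ + (m + 1))
      ∨ (α (k₀ + m + 1) + 1 = α (k₀ + m) ∧
            R ((α (k₀ + m + 1) : ℝ) / n) < R ((α (k₀ + m) : ℝ) / n) ∧
            α (k₀ + m + 1) + (m + 1) = α k₀)) := by
    intro m
    induction m with
    | zero =>
      intro _
      simp only [Nat.add_zero]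
      have hRk : Rk k₀ = R := hwin k₀ le_rfl (by omega)
      by_cases hex : ∃ j : ℕ, j ≤ n ∧ (j = α k₀ + 1 ∨ j + 1 = α k₀) ∧
          Rk k₀ ((j : ℝ) / n) < Rk k₀ ((α k₀ : ℝ) / n)
      · obtain ⟨hmove, hdec⟩ := hstep k₀ hex
        rw [hRk] at hdec
        rcases hmove with h | h
        · exact Or.inr (Or.inl ⟨h, hdec, by omega⟩)
        · exact Or.inr (Or.inr ⟨h, hdec, by omega⟩)
      · have hst := hstay k₀ hex
        left
        intro j hj hadj hlt
        rw [hst] at hadj hlt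
        exact hex ⟨j, hj, hadj, by rw [hRk]; exact hlt⟩
    | succ m ih =>
      intro hm1
      have prev := ih (by omega)
      have hRk : Rk (k₀ + m + 1) = R := hwin _ (by omega) (by omega)
      have hidx : k₀ + (m + 1) + 1 = k₀ + m + 1 + 1 := by omega
      rw [hidx]
      have hidx2 : k₀ + (m + 1) = k₀ + m + 1 := by omega
      rw [hidx2]
      set k := k₀ + m + 1 with hk
      by_cases hex : ∃ j : ℕ, j ≤ n ∧ (j = α k + 1 ∨ j + 1 = α k) ∧
          Rk k ((j : ℝ) / n) < Rk k ((α k : ℝ) / n)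
      · obtain ⟨hmove, hdec⟩ := hstep k hex
        rw [hRk] at hdec
        rcases prev with hLO | ⟨hup, hdec0, hsum⟩ | ⟨hdown, hdec0, hsum⟩
        · -- previous position locally optimal, cannot move: contradiction with hex
          exfalso
          obtain ⟨j, hj, hadj, hlt⟩ := hex
          rw [hRk] at hlt
          exact hLO j hj hadj hlt
        · rcases hmove with h | h
          · exact Or.inr (Or.inl ⟨h, hdec, by omega⟩)
          · -- moved down after moving up: revisits, contradiction
            exfalso
            have he : α (k + 1) = α (k₀ + m) := by omega
            rw [he] at hdec
            exact lt_irrefl _ (lt_trans hdec hdec0)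
        · rcases hmove with h | h
          · exfalso
            have he : α (k + 1) = α (k₀ + m) := by omega
            rw [he] at hdec
            exact lt_irrefl _ (lt_trans hdec hdec0)
          · exact Or.inr (Or.inr ⟨h, hdec, by omega⟩)
      · have hst := hstay k hex
        left
        intro j hj hadj hlt
        rw [hst] at hadj hlt
        exact hex ⟨j, hj, hadj, by rw [hRk]; exact hlt⟩
  have hfin := main (n - 1) (by omega)
  have hidx : k₀ + (n - 1) + 1 = k₀ + n := by omega
  rw [hidx] at hfin
  rcases hfin with hLO | ⟨hup, hdec, hsum⟩ | ⟨hdown, hdec, hsum⟩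
  · exact hLO
  · -- walked up all the way: α (k₀ + n) = n
    have hend : α (k₀ + n) = n := by
      have := hαgrid (k₀ + n)
      omega
    intro j hj hadj hlt
    have hje : j = α (k₀ + (n - 1)) := by omega
    rw [hje] at hlt
    exact lt_irrefl _ (lt_trans hlt hdec)
  · -- walked down all the way: α (k₀ + n) = 0
    have hend : α (k₀ + n) = 0 := by
      have := hαgrid k₀
      omega
    intro j hj hadj hlt
    have hje : j = α (k₀ + (n - 1)) := by omega
    rw [hje] at hlt
    exact lt_irrefl _ (lt_trans hlt hdec)
end

section
/- (Proposition 1 combined with Proposition 2: convergence to the unique minimizer.) Let R_k : ℝ → ℝ be convex for each k, and suppose there is a grid index i* such that for every k ∈ {k₀, k₀+1, …, k₀+n-1}, R_k(i*/n) < R_k(j/n) for all grid indices j ≠ i* (the unique grid minimizer is the same throughout the window). Then any GOTL weight sequence α satisfies α_{k₀+n} = i*. -/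
/-- Auxiliary: strict inequality of grid divisions. -/
private lemma gotl_div_lt {n a b : ℕ} (hn : 1 ≤ n) (h : a < b) :
    (a : ℝ) / n < (b : ℝ) / n := by
  have hnpos : (0 : ℝ) < n := by exact_mod_cast hn
  have hab : (a : ℝ) < b := by exact_mod_cast h
  exact div_lt_div_of_pos_right hab hnpos

/-- Auxiliary: for a convex function, strictness propagates outward (to the right). -/
private lemma gotl_key_right {n : ℕ} (hn : 1 ≤ n) {f : ℝ → ℝ}
    (hf : ConvexOn ℝ Set.univ f) {i a b : ℕ} (h1 : i < a) (h2 : a < b)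
    (hfi : f ((i : ℝ) / n) < f ((a : ℝ) / n)) : f ((a : ℝ) / n) < f ((b : ℝ) / n) := by
  have hmem : ((a : ℝ) / n) ∈ openSegment ℝ ((i : ℝ) / n) ((b : ℝ) / n) := by
    rw [openSegment_eq_Ioo (gotl_div_lt hn (h1.trans h2))]
    exact ⟨gotl_div_lt hn h1, gotl_div_lt hn h2⟩
  exact hf.lt_right_of_left_lt (Set.mem_univ _) (Set.mem_univ _) hmem hfi

/-- Auxiliary: for a convex function, strictness propagates outward (to the left). -/
private lemma gotl_key_left {n : ℕ} (hn : 1 ≤ n) {f : ℝ → ℝ}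
    (hf : ConvexOn ℝ Set.univ f) {i a b : ℕ} (h1 : b < a) (h2 : a < i)
    (hfi : f ((i : ℝ) / n) < f ((a : ℝ) / n)) : f ((a : ℝ) / n) < f ((b : ℝ) / n) := by
  have hmem : ((a : ℝ) / n) ∈ openSegment ℝ ((b : ℝ) / n) ((i : ℝ) / n) := by
    rw [openSegment_eq_Ioo (gotl_div_lt hn (h1.trans h2))]
    exact ⟨gotl_div_lt hn h1, gotl_div_lt hn h2⟩
  exact hf.lt_left_of_right_lt (Set.mem_univ _) (Set.mem_univ _) hmem hfi

/-- Propositions 1 and 2 combined: if each objective `Rk k` is convex and throughout the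
window `{k₀, …, k₀ + n - 1}` the grid index `i*` is the unique grid minimizer of `Rk k`,
then any GOTL weight sequence satisfies `α (k₀ + n) = i*`. -/
theorem gotl_converges_to_unique_minimizer (n : ℕ) (hn : 1 ≤ n)
    (Rk : ℕ → ℝ → ℝ) (hconv : ∀ k, ConvexOn ℝ Set.univ (Rk k))
    (α : ℕ → ℕ)
    (hαgrid : ∀ k, α k ≤ n)
    (hstep : ∀ k,
      (∃ j : ℕ, j ≤ n ∧ (j = α k + 1 ∨ j + 1 = α k) ∧
          Rk k ((j : ℝ) / n) < Rk k ((α k : ℝ) / n)) →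
        ((α (k + 1) = α k + 1 ∨ α (k + 1) + 1 = α k) ∧
          Rk k ((α (k + 1) : ℝ) / n) < Rk k ((α k : ℝ) / n)))
    (hstay : ∀ k,
      (¬ ∃ j : ℕ, j ≤ n ∧ (j = α k + 1 ∨ j + 1 = α k) ∧
          Rk k ((j : ℝ) / n) < Rk k ((α k : ℝ) / n)) →
        α (k + 1) = α k)
    (istar : ℕ) (histar : istar ≤ n) (k₀ : ℕ)
    (hmin : ∀ k, k₀ ≤ k → k < k₀ + n →
      ∀ j : ℕ, j ≤ n → j ≠ istar → Rk k ((istar : ℝ) / n) < Rk k ((j : ℝ) / n)) :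
    α (k₀ + n) = istar := by
  -- one-step progress lemma
  have key : ∀ k, k₀ ≤ k → k < k₀ + n →
      Nat.dist (α (k + 1)) istar ≤ Nat.dist (α k) istar - 1 := by
    intro k hk1 hk2
    have hmink := hmin k hk1 hk2
    rcases lt_trichotomy (α k) istar with hlt | heq | hgt
    · -- α k < istar : there is a better reply (α k + 1); move must be to the right
      have hne : α k ≠ istar := hlt.ne
      have hbetter : Rk k (((α k + 1 : ℕ) : ℝ) / n) < Rk k ((α k : ℝ) / n) := by
        rcases eq_or_lt_of_le (show α k + 1 ≤ istar from hlt) with h | h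
        · rw [show α k + 1 = istar by omega]
          exact hmink (α k) (hαgrid k) hne
        · have h2 : α k + 1 < istar := by omega
          exact gotl_key_left hn (hconv k) (Nat.lt_succ_self _) h2
            (hmink (α k + 1) (by omega) (by omega))
      obtain ⟨hmove, hdec⟩ := hstep k ⟨α k + 1, by omega, Or.inl rfl, hbetter⟩
      rcases hmove with hr | hl
      · rw [hr]
        unfold Nat.dist; omega
      · -- moved left: contradiction with convexity
        exfalso
        have hak1 : α (k + 1) < α k := by omega
        have hwrong : Rk k ((α k : ℝ) / n) < Rk k (((α (k + 1)) : ℝ) / n) :=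
          gotl_key_left hn (hconv k) hak1 hlt (hmink (α k) (hαgrid k) hne)
        linarith
    · -- at the minimizer: no better reply, stay
      have hstayk : α (k + 1) = α k := by
        apply hstay k
        rintro ⟨j, hj, hjadj, hjlt⟩
        have hjne : j ≠ istar := by omega
        have := hmink j hj hjne
        rw [heq] at hjlt
        linarith
      rw [hstayk, heq]
      simp [Nat.dist_self]
    · -- α k > istar : better reply is α k - 1; move must be to the left
      have hne : α k ≠ istar := hgt.ne'
      obtain ⟨m, hm⟩ : ∃ m, α k = m + 1 := ⟨α k - 1, by omega⟩
      have hbetter : Rk k ((m : ℝ) / n) < Rk k ((α k : ℝ) / n) := by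
        rcases eq_or_lt_of_le (show istar ≤ m by omega) with h | h
        · rw [← h]
          exact hmink (α k) (hαgrid k) hne
        · exact gotl_key_right hn (hconv k) h (by omega)
            (hmink m (by have := hαgrid k; omega) (by omega))
      obtain ⟨hmove, hdec⟩ := hstep k ⟨m, by have := hαgrid k; omega,
        Or.inr (by omega), hbetter⟩
      rcases hmove with hr | hl
      · -- moved right: contradiction with convexity
        exfalso
        have hak1 : α k < α (k + 1) := by omega
        have hwrong : Rk k ((α k : ℝ) / n) < Rk k (((α (k + 1)) : ℝ) / n) :=
          gotl_key_right hn (hconv k) hgt hak1 (hmink (α k) (hαgrid k) hne)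
        linarith
      · unfold Nat.dist; omega
  -- induction: the distance shrinks
  have main : ∀ m, m ≤ n → Nat.dist (α (k₀ + m)) istar ≤ n - m := by
    intro m
    induction m with
    | zero =>
      intro _
      have := hαgrid (k₀ + 0)
      unfold Nat.dist; omega
    | succ m ih =>
      intro hm
      have h1 := ih (by omega)
      have h2 := key (k₀ + m) (by omega) (by omega)
      have h3 : k₀ + (m + 1) = (k₀ + m) + 1 := by omega
      rw [h3]
      omega
  have h4 := main n le_rfl
  have h5 : Nat.dist (α (k₀ + n)) istar = 0 := by omega
  exact Nat.eq_of_dist_eq_zero h5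
end

section
/- (Negative product bias with equally accurate predictors.) If w t > 0 for all t, ∑_t w t * (a t)^2 = ∑_t w t * (b t)^2 > 0, and ∑_t w t * a t * b t < 0, then there exists α ∈ (0,1) with R(α) < min(R(0), R(1)); i.e., a strictly combined predictor strictly outperforms both the target and the source predictor even though each performs equally well on its own. -/
/-- Negative product bias with equally accurate predictors: if the target and source
predictors have equal positive weighted squared errors and negative product bias, then
some strictly combined predictor strictly outperforms both of them. -/
theorem gotl_combined_beats_both (N : ℕ) (hN : 1 ≤ N)
    (w a b : Fin N → ℝ) (hw : ∀ t, 0 < w t)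
    (R : ℝ → ℝ)
    (hR : ∀ α : ℝ, R α = ∑ t, w t * ((1 - α) * a t + α * b t) ^ 2)
    (heq : ∑ t, w t * (a t) ^ 2 = ∑ t, w t * (b t) ^ 2)
    (hpos : 0 < ∑ t, w t * (a t) ^ 2)
    (hbias : ∑ t, w t * a t * b t < 0) :
    ∃ α : ℝ, α ∈ Set.Ioo (0 : ℝ) 1 ∧ R α < min (R 0) (R 1) := by
  refine ⟨1/2, by norm_num, ?_⟩
  have h0 : R 0 = ∑ t, w t * (a t) ^ 2 := by
    rw [hR]; apply Finset.sum_congr rfl; intro t _; ring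
  have h1 : R 1 = ∑ t, w t * (b t) ^ 2 := by
    rw [hR]; apply Finset.sum_congr rfl; intro t _; ring
  have hhalf : R (1/2) =
      ((∑ t, w t * (a t) ^ 2) + 2 * (∑ t, w t * a t * b t) + ∑ t, w t * (b t) ^ 2) / 4 := by
    rw [hR]
    rw [Finset.mul_sum, ← Finset.sum_add_distrib, ← Finset.sum_add_distrib, eq_div_iff (by norm_num : (4:ℝ) ≠ 0), Finset.sum_mul]
    apply Finset.sum_congr rfl; intro t _; ring
  rw [h0, h1, hhalf, ← heq]
  rw [min_self]
  linarith
end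

section
/- Assume w t > 0 for all t and a t₀ ≠ b t₀ for some t₀, and let α* = (∑_t w t * a t * (a t - b t)) / (∑_t w t * (a t - b t)^2) be the unique minimizer of R over ℝ. Then α* ∈ (0,1) if and only if ∑_t w t * a t * b t < ∑_t w t * (a t)^2 and ∑_t w t * a t * b t < ∑_t w t * (b t)^2; and in that case R(α*) < min(R(0), R(1)). -/
/-- The unique minimizer `α*` of the GOTL objective lies in `(0,1)` if and only if the
weighted product bias `∑ t, w t * a t * b t` is smaller than both `∑ t, w t * (a t)^2`
and `∑ t, w t * (b t)^2`; and in that case the combined predictor at `α*` strictly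
outperforms both the target (`α = 0`) and source (`α = 1`) predictors. -/
theorem gotl_interior_minimizer_iff (N : ℕ) (hN : 1 ≤ N)
    (w a b : Fin N → ℝ) (hw : ∀ t, 0 < w t)
    (t₀ : Fin N) (hab : a t₀ ≠ b t₀)
    (R : ℝ → ℝ)
    (hR : ∀ α : ℝ, R α = ∑ t, w t * ((1 - α) * a t + α * b t) ^ 2)
    (αstar : ℝ)
    (hαstar : αstar =
      (∑ t, w t * a t * (a t - b t)) / (∑ t, w t * (a t - b t) ^ 2)) :
    (αstar ∈ Set.Ioo (0 : ℝ) 1 ↔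
      (∑ t, w t * a t * b t < ∑ t, w t * (a t) ^ 2 ∧
       ∑ t, w t * a t * b t < ∑ t, w t * (b t) ^ 2)) ∧
    (αstar ∈ Set.Ioo (0 : ℝ) 1 → R αstar < min (R 0) (R 1)) := by
  set T : ℝ := ∑ t, w t * a t * (a t - b t) with hT
  set S : ℝ := ∑ t, w t * (a t - b t) ^ 2 with hS
  have hSpos : 0 < S := by
    apply Finset.sum_pos' (fun t _ => mul_nonneg (hw t).le (sq_nonneg _))
    exact ⟨t₀, Finset.mem_univ _, by
      have hne : a t₀ - b t₀ ≠ 0 := sub_ne_zero.mpr hab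
      exact mul_pos (hw t₀) ((sq_nonneg _).lt_of_ne (Ne.symm (pow_ne_zero 2 hne)))⟩
  have hA : ∑ t, w t * (a t) ^ 2 - ∑ t, w t * a t * b t = T := by
    rw [hT, ← Finset.sum_sub_distrib]
    exact Finset.sum_congr rfl fun t _ => by ring
  have hB : ∑ t, w t * (b t) ^ 2 - ∑ t, w t * a t * b t = S - T := by
    rw [hT, hS, ← Finset.sum_sub_distrib, ← Finset.sum_sub_distrib]
    exact Finset.sum_congr rfl fun t _ => by ring
  have hRq : ∀ α : ℝ, R α = (∑ t, w t * (a t) ^ 2) - 2 * α * T + α ^ 2 * S := by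
    intro α
    rw [hR, hT, hS, Finset.mul_sum, Finset.mul_sum, ← Finset.sum_sub_distrib,
      ← Finset.sum_add_distrib]
    exact Finset.sum_congr rfl fun t _ => by ring
  have hmem : αstar ∈ Set.Ioo (0 : ℝ) 1 ↔ (0 < T ∧ T < S) := by
    rw [hαstar, Set.mem_Ioo, div_pos_iff, div_lt_one hSpos]
    constructor
    · rintro ⟨h1 | h1, h2⟩
      · exact ⟨h1.1, h2⟩
      · linarith [h1.2]
    · rintro ⟨h1, h2⟩; exact ⟨Or.inl ⟨h1, hSpos⟩, h2⟩
  constructor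
  · rw [hmem]; constructor
    · rintro ⟨h1, h2⟩; constructor <;> linarith
    · rintro ⟨h1, h2⟩; constructor <;> linarith
  · intro hin
    obtain ⟨h1, h2⟩ := hmem.mp hin
    have hαval : αstar = T / S := by rw [hαstar]
    rw [hRq, hRq, hRq, hαval, lt_min_iff]
    have hS' : S ≠ 0 := ne_of_gt hSpos
    constructor
    · have : (T / S) ^ 2 * S = T ^ 2 / S := by field_simp
      rw [this]
      have h3 : 0 < T ^ 2 / S := by positivity
      have : 2 * (T / S) * T = 2 * (T ^ 2 / S) := by field_simp
      rw [this]; linarith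
    · have e1 : (T / S) ^ 2 * S = T ^ 2 / S := by field_simp
      have e2 : 2 * (T / S) * T = 2 * (T ^ 2 / S) := by field_simp
      rw [e1, e2]
      have key : T ^ 2 / S < 2 * T - S + 2 * (T ^ 2 / S) - (T ^ 2 / S) + (T ^ 2 / S) → True := fun _ => trivial
      have h5 : (2 * T - S) * S < T ^ 2 := by nlinarith [sq_nonneg (T - S)]
      have h4 : 2 * T - S < T ^ 2 / S := (lt_div_iff₀ hSpos).mpr h5
      linarith
end
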